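/- For a positive integer p and any integer k: \sum_{s=0}^{p} \binom{p}{s} B_s^{(k)}/(p+2-s) = B_{p+1}^{(k)}(1)/(p+1) - B_{p+2}^{(k)}(1)/((p+1)(p+2)) + B_{p+2}^{(k)}/((p+1)(p+2)). -/

import Mathlib

noncomputable section

/-- Signed Stirling numbers of the first kind. -/
def stirling1 : ℕ → ℕ → ℤ
  | 0, 0 => 1
  | 0, _ + 1 => 0
  | _ + 1, 0 => 0
  | n + 1, m + 1 => stirling1 n m - n * stirling1 n (m + 1)

/-- `n!`-normalized coefficients of `Ei_k (log (1+t))`. -/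
def polyExpCoeff (k : ℤ) (n : ℕ) : ℚ :=
  ∑ m ∈ Finset.Icc 1 n, (stirling1 n m : ℚ) / (m : ℚ) ^ (k - 1)

/-- Type 2 poly-Bernoulli numbers of index `k`, defined by the recursion coming from the
generating function `Ei_k (log (1+t)) / (e^t - 1) = ∑ B_n^{(k)} t^n/n!`. -/
def polyBernoulli (k : ℤ) : ℕ → ℚ
  | n =>
    (polyExpCoeff k (n + 1) -
      ∑ l ∈ (Finset.range n).attach, ((n + 1).choose l.1 : ℚ) * polyBernoulli k l.1) / (n + 1)
  termination_by n => n
  decreasing_by exact Finset.mem_range.mp l.2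

/-- Type 2 poly-Bernoulli polynomials of index `k`, as functions on `ℝ`. -/
def polyBernoulliPoly (k : ℤ) (n : ℕ) (x : ℝ) : ℝ :=
  ∑ l ∈ Finset.range (n + 1), (n.choose l : ℝ) * (polyBernoulli k l : ℝ) * x ^ (n - l)

/-- Bernoulli polynomials as functions on `ℝ`. -/
def bernoulliPolyFun (n : ℕ) (x : ℝ) : ℝ :=
  ∑ l ∈ Finset.range (n + 1), (n.choose l : ℝ) * (bernoulli l : ℝ) * x ^ (n - l)

/-- Bernoulli functions `B̄_n(x) = B_n(⟨x⟩)`. -/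
def bernoulliBar (n : ℕ) (x : ℝ) : ℝ := bernoulliPolyFun n (Int.fract x)

/-- Type 2 poly-Bernoulli functions `B̄_n^{(k)}(x) = B_n^{(k)}(⟨x⟩)`. -/
def polyBernoulliBar (k : ℤ) (n : ℕ) (x : ℝ) : ℝ := polyBernoulliPoly k n (Int.fract x)

/-- Poly-Dedekind sums `S_p^{(k)}(h,m)`. -/
def polyDedekindSum (k : ℤ) (p h m : ℕ) : ℝ :=
  ∑ μ ∈ Finset.Ico 1 m, (μ / m : ℝ) * polyBernoulliBar k p (h * μ / m)

/-- Apostol's generalized Dedekind sums `S_p(h,m)`. -/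
def genDedekindSum (p h m : ℕ) : ℝ :=
  ∑ μ ∈ Finset.Ico 1 m, (μ / m : ℝ) * bernoulliBar p (h * μ / m)

/-- The polyexponential function `Ei_k`. -/
def polyExp (k : ℤ) (x : ℝ) : ℝ :=
  ∑' n : ℕ, x ^ (n + 1) / ((n + 1 : ℝ) ^ k * (Nat.factorial n : ℝ))

/-- The sawtooth function `((x))`. -/
def sawtooth (x : ℝ) : ℝ := if Int.fract x = 0 then 0 else Int.fract x - 1 / 2

end
lemma coeff_aux (p s : ℕ) (hs : s ≤ p) :
    (p.choose s : ℝ) / ((p + 2 - s : ℕ) : ℝ) =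
      ((p + 1).choose s : ℝ) / (p + 1) - ((p + 2).choose s : ℝ) / ((p + 1) * (p + 2)) := by
  have hs1 : s ≤ p + 1 := hs.trans (Nat.le_succ p)
  have hs2 : s ≤ p + 2 := hs1.trans (Nat.le_succ _)
  have h1 : (p.choose s : ℝ) * (p + 1) = ((p + 1).choose s : ℝ) * ((p + 1 - s : ℕ) : ℝ) := by
    exact_mod_cast congrArg (Nat.cast : ℕ → ℝ) (Nat.choose_mul_succ_eq p s)
  have h2 : ((p + 1).choose s : ℝ) * (p + 2) = ((p + 2).choose s : ℝ) * ((p + 2 - s : ℕ) : ℝ) := by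
    exact_mod_cast congrArg (Nat.cast : ℕ → ℝ) (Nat.choose_mul_succ_eq (p + 1) s)
  have c1 : ((p + 1 - s : ℕ) : ℝ) = (p : ℝ) + 1 - s := by
    push_cast [Nat.cast_sub hs1]; ring
  have c2 : ((p + 2 - s : ℕ) : ℝ) = (p : ℝ) + 2 - s := by
    push_cast [Nat.cast_sub hs2]; ring
  rw [c1] at h1
  rw [c2] at h2 ⊢
  have hsp : (s : ℝ) ≤ p := by exact_mod_cast hs
  have hd : (p : ℝ) + 2 - s ≠ 0 := by nlinarith
  have hp1 : ((p : ℝ) + 1) ≠ 0 := by positivity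
  have hp2 : ((p : ℝ) + 2) ≠ 0 := by positivity
  field_simp
  linear_combination ((p:ℝ)+2) * h1 - h2


/-- `∑_{s=0}^p (p choose s) B_s^{(k)}/(p+2-s)
  = B_{p+1}^{(k)}(1)/(p+1) - B_{p+2}^{(k)}(1)/((p+1)(p+2)) + B_{p+2}^{(k)}/((p+1)(p+2))`. -/
theorem polyBernoulli_identity2 (p : ℕ) (hp : 0 < p) (k : ℤ) :
    ∑ s ∈ Finset.range (p + 1), (p.choose s : ℝ) * (polyBernoulli k s : ℝ) / ((p + 2 - s : ℕ)) =
      polyBernoulliPoly k (p + 1) 1 / (p + 1) -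
        polyBernoulliPoly k (p + 2) 1 / ((p + 1) * (p + 2)) +
        (polyBernoulli k (p + 2) : ℝ) / ((p + 1) * (p + 2)) := by
  have hpoly : ∀ n : ℕ, polyBernoulliPoly k n 1 =
      ∑ l ∈ Finset.range (n + 1), (n.choose l : ℝ) * (polyBernoulli k l : ℝ) := by
    intro n; simp [polyBernoulliPoly]
  have e1 : polyBernoulliPoly k (p + 1) 1 =
      (∑ l ∈ Finset.range (p + 1), ((p + 1).choose l : ℝ) * (polyBernoulli k l : ℝ)) +
        (polyBernoulli k (p + 1) : ℝ) := by
    rw [hpoly, Finset.sum_range_succ]; simp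
  have e2 : polyBernoulliPoly k (p + 2) 1 =
      (∑ l ∈ Finset.range (p + 1), ((p + 2).choose l : ℝ) * (polyBernoulli k l : ℝ)) +
        ((p : ℝ) + 2) * (polyBernoulli k (p + 1) : ℝ) + (polyBernoulli k (p + 2) : ℝ) := by
    rw [hpoly, Finset.sum_range_succ, Finset.sum_range_succ]
    have : ((p + 2).choose (p + 1) : ℝ) = (p : ℝ) + 2 := by
      rw [Nat.choose_succ_self_right]; push_cast; ring
    rw [this]; simp
  rw [e1, e2]
  have hstep : ∑ s ∈ Finset.range (p + 1),
      (p.choose s : ℝ) * (polyBernoulli k s : ℝ) / ((p + 2 - s : ℕ) : ℝ) =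
      (∑ l ∈ Finset.range (p + 1), ((p + 1).choose l : ℝ) * (polyBernoulli k l : ℝ)) / (p + 1) -
      (∑ l ∈ Finset.range (p + 1), ((p + 2).choose l : ℝ) * (polyBernoulli k l : ℝ)) /
        ((p + 1) * (p + 2)) := by
    rw [Finset.sum_div, Finset.sum_div, ← Finset.sum_sub_distrib]
    refine Finset.sum_congr rfl fun s hs => ?_
    have hs' : s ≤ p := Nat.lt_succ_iff.mp (Finset.mem_range.mp hs)
    have h := coeff_aux p s hs'
    linear_combination (polyBernoulli k s : ℝ) * h
  rw [hstep]
  have hp1 : ((p : ℝ) + 1) ≠ 0 := by positivity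
  have hp2 : ((p : ℝ) + 2) ≠ 0 := by positivity
  field_simp
  ring
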